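/- arXiv:2202.08162 — 4 statements merged into one kernel-verified Lean document; each statement's English description precedes it below -/
import Mathlib

section
/- Each Gaudin Hamiltonian H_r commutes with the diagonal action of gl(1|1) on the tensor product L_Λ: [H_r, X] = 0 for all X ∈ gl(1|1). -/
/-- The action of `k` commuting (in the graded sense) copies of `gl(1|1)` on a complex vector
space `W` — e.g. the tensor product `L_Λ = L_{λ⁽¹⁾} ⊗ ... ⊗ L_{λ⁽ᵏ⁾}` with `e u i j`
representing the operator `e_{i+1,j+1}^{(u+1)}` acting on the `u`-th tensor factor (with the
super sign rules baked in).  Same-site operators satisfy the `gl(1|1)` supercommutator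
relations; different-site operators supercommute (odd ones anticommute). -/
structure GaudinRep (k : ℕ) (W : Type) [AddCommGroup W] [Module ℂ W] where
  e : Fin k → Fin 2 → Fin 2 → Module.End ℂ W
  same_site : ∀ (u : Fin k) (i j l m : Fin 2),
    e u i j * e u l m -
        ((-1 : ℂ) ^ (((i : ℕ) + (j : ℕ)) * ((l : ℕ) + (m : ℕ)))) • (e u l m * e u i j) =
      (if j = l then e u i m else 0) -
        ((-1 : ℂ) ^ (((i : ℕ) + (j : ℕ)) * ((l : ℕ) + (m : ℕ)))) •
          (if i = m then e u l j else 0)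
  cross_site : ∀ (u v : Fin k), u ≠ v → ∀ (i j l m : Fin 2),
    e u i j * e v l m = ((-1 : ℂ) ^ (((i : ℕ) + (j : ℕ)) * ((l : ℕ) + (m : ℕ)))) •
      (e v l m * e u i j)

namespace GaudinRep

variable {k : ℕ} {W : Type} [AddCommGroup W] [Module ℂ W]

/-- The quadratic Gaudin Hamiltonian
`H_r = Σ_{s≠r} (e₁₁⁽ʳ⁾e₁₁⁽ˢ⁾ − e₁₂⁽ʳ⁾e₂₁⁽ˢ⁾ + e₂₁⁽ʳ⁾e₁₂⁽ˢ⁾ − e₂₂⁽ʳ⁾e₂₂⁽ˢ⁾)/(b_r − b_s)`. -/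
noncomputable def H (ρ : GaudinRep k W) (b : Fin k → ℂ) (r : Fin k) : Module.End ℂ W :=
  ∑ s ∈ Finset.univ.erase r,
    (b r - b s)⁻¹ •
      (ρ.e r 0 0 * ρ.e s 0 0 - ρ.e r 0 1 * ρ.e s 1 0 +
        ρ.e r 1 0 * ρ.e s 0 1 - ρ.e r 1 1 * ρ.e s 1 1)

end GaudinRep

namespace GaudinRepAux
variable {k : ℕ} {W : Type} [AddCommGroup W] [Module ℂ W]

private lemma mulE {R : Type*} [Ring R] {a b c : R} (h : a * b = c) (t : R) :
    a * (b * t) = c * t := by rw [← mul_assoc, h]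

private lemma xf (ρ : GaudinRep k W) (u : Fin k) :
    ρ.e u 0 1 * ρ.e u 0 0 = ρ.e u 0 0 * ρ.e u 0 1 - ρ.e u 0 1 := by
  have h := ρ.same_site u 0 1 0 0
  norm_num at h
  linear_combination (norm := abel) h

private lemma yf (ρ : GaudinRep k W) (u : Fin k) :
    ρ.e u 1 0 * ρ.e u 0 0 = ρ.e u 0 0 * ρ.e u 1 0 + ρ.e u 1 0 := by
  have h := ρ.same_site u 1 0 0 0
  norm_num at h
  linear_combination (norm := abel) h

private lemma hf (ρ : GaudinRep k W) (u : Fin k) :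
    ρ.e u 1 1 * ρ.e u 0 0 = ρ.e u 0 0 * ρ.e u 1 1 := by
  have h := ρ.same_site u 1 1 0 0
  norm_num at h
  linear_combination (norm := abel) h

private lemma yx (ρ : GaudinRep k W) (u : Fin k) :
    ρ.e u 1 0 * ρ.e u 0 1 = ρ.e u 0 0 + ρ.e u 1 1 - ρ.e u 0 1 * ρ.e u 1 0 := by
  have h := ρ.same_site u 1 0 0 1
  norm_num at h
  linear_combination (norm := abel) h

private lemma hx (ρ : GaudinRep k W) (u : Fin k) :
    ρ.e u 1 1 * ρ.e u 0 1 = ρ.e u 0 1 * ρ.e u 1 1 - ρ.e u 0 1 := by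
  have h := ρ.same_site u 1 1 0 1
  norm_num at h
  linear_combination (norm := abel) h

private lemma hy (ρ : GaudinRep k W) (u : Fin k) :
    ρ.e u 1 1 * ρ.e u 1 0 = ρ.e u 1 0 * ρ.e u 1 1 + ρ.e u 1 0 := by
  have h := ρ.same_site u 1 1 1 0
  norm_num at h
  linear_combination (norm := abel) h

private lemma xx (ρ : GaudinRep k W) (u : Fin k) :
    ρ.e u 0 1 * ρ.e u 0 1 = 0 := by
  have h := ρ.same_site u 0 1 0 1
  norm_num at h
  have h2 : (2:ℂ) • (ρ.e u 0 1 * ρ.e u 0 1) = 0 := by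
    rw [two_smul]; linear_combination (norm := abel) h
  exact (smul_eq_zero.mp h2).resolve_left (by norm_num)

private lemma yy (ρ : GaudinRep k W) (u : Fin k) :
    ρ.e u 1 0 * ρ.e u 1 0 = 0 := by
  have h := ρ.same_site u 1 0 1 0
  norm_num at h
  have h2 : (2:ℂ) • (ρ.e u 1 0 * ρ.e u 1 0) = 0 := by
    rw [two_smul]; linear_combination (norm := abel) h
  exact (smul_eq_zero.mp h2).resolve_left (by norm_num)

private lemma cr0000 (ρ : GaudinRep k W) {u v : Fin k} (hvu : v ≠ u) :
    ρ.e v 0 0 * ρ.e u 0 0 = ρ.e u 0 0 * ρ.e v 0 0 := by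
  have h := ρ.cross_site v u hvu 0 0 0 0
  norm_num at h
  exact h

private lemma cr0001 (ρ : GaudinRep k W) {u v : Fin k} (hvu : v ≠ u) :
    ρ.e v 0 0 * ρ.e u 0 1 = ρ.e u 0 1 * ρ.e v 0 0 := by
  have h := ρ.cross_site v u hvu 0 0 0 1
  norm_num at h
  exact h

private lemma cr0010 (ρ : GaudinRep k W) {u v : Fin k} (hvu : v ≠ u) :
    ρ.e v 0 0 * ρ.e u 1 0 = ρ.e u 1 0 * ρ.e v 0 0 := by
  have h := ρ.cross_site v u hvu 0 0 1 0
  norm_num at h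
  exact h

private lemma cr0011 (ρ : GaudinRep k W) {u v : Fin k} (hvu : v ≠ u) :
    ρ.e v 0 0 * ρ.e u 1 1 = ρ.e u 1 1 * ρ.e v 0 0 := by
  have h := ρ.cross_site v u hvu 0 0 1 1
  norm_num at h
  exact h

private lemma cr0100 (ρ : GaudinRep k W) {u v : Fin k} (hvu : v ≠ u) :
    ρ.e v 0 1 * ρ.e u 0 0 = ρ.e u 0 0 * ρ.e v 0 1 := by
  have h := ρ.cross_site v u hvu 0 1 0 0
  norm_num at h
  exact h

private lemma cr0101 (ρ : GaudinRep k W) {u v : Fin k} (hvu : v ≠ u) :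
    ρ.e v 0 1 * ρ.e u 0 1 = -(ρ.e u 0 1 * ρ.e v 0 1) := by
  have h := ρ.cross_site v u hvu 0 1 0 1
  norm_num at h
  exact h

private lemma cr0110 (ρ : GaudinRep k W) {u v : Fin k} (hvu : v ≠ u) :
    ρ.e v 0 1 * ρ.e u 1 0 = -(ρ.e u 1 0 * ρ.e v 0 1) := by
  have h := ρ.cross_site v u hvu 0 1 1 0
  norm_num at h
  exact h

private lemma cr0111 (ρ : GaudinRep k W) {u v : Fin k} (hvu : v ≠ u) :
    ρ.e v 0 1 * ρ.e u 1 1 = ρ.e u 1 1 * ρ.e v 0 1 := by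
  have h := ρ.cross_site v u hvu 0 1 1 1
  norm_num at h
  exact h

private lemma cr1000 (ρ : GaudinRep k W) {u v : Fin k} (hvu : v ≠ u) :
    ρ.e v 1 0 * ρ.e u 0 0 = ρ.e u 0 0 * ρ.e v 1 0 := by
  have h := ρ.cross_site v u hvu 1 0 0 0
  norm_num at h
  exact h

private lemma cr1001 (ρ : GaudinRep k W) {u v : Fin k} (hvu : v ≠ u) :
    ρ.e v 1 0 * ρ.e u 0 1 = -(ρ.e u 0 1 * ρ.e v 1 0) := by
  have h := ρ.cross_site v u hvu 1 0 0 1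
  norm_num at h
  exact h

private lemma cr1010 (ρ : GaudinRep k W) {u v : Fin k} (hvu : v ≠ u) :
    ρ.e v 1 0 * ρ.e u 1 0 = -(ρ.e u 1 0 * ρ.e v 1 0) := by
  have h := ρ.cross_site v u hvu 1 0 1 0
  norm_num at h
  exact h

private lemma cr1011 (ρ : GaudinRep k W) {u v : Fin k} (hvu : v ≠ u) :
    ρ.e v 1 0 * ρ.e u 1 1 = ρ.e u 1 1 * ρ.e v 1 0 := by
  have h := ρ.cross_site v u hvu 1 0 1 1
  norm_num at h
  exact h

private lemma cr1100 (ρ : GaudinRep k W) {u v : Fin k} (hvu : v ≠ u) :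
    ρ.e v 1 1 * ρ.e u 0 0 = ρ.e u 0 0 * ρ.e v 1 1 := by
  have h := ρ.cross_site v u hvu 1 1 0 0
  norm_num at h
  exact h

private lemma cr1101 (ρ : GaudinRep k W) {u v : Fin k} (hvu : v ≠ u) :
    ρ.e v 1 1 * ρ.e u 0 1 = ρ.e u 0 1 * ρ.e v 1 1 := by
  have h := ρ.cross_site v u hvu 1 1 0 1
  norm_num at h
  exact h

private lemma cr1110 (ρ : GaudinRep k W) {u v : Fin k} (hvu : v ≠ u) :
    ρ.e v 1 1 * ρ.e u 1 0 = ρ.e u 1 0 * ρ.e v 1 1 := by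
  have h := ρ.cross_site v u hvu 1 1 1 0
  norm_num at h
  exact h

private lemma cr1111 (ρ : GaudinRep k W) {u v : Fin k} (hvu : v ≠ u) :
    ρ.e v 1 1 * ρ.e u 1 1 = ρ.e u 1 1 * ρ.e v 1 1 := by
  have h := ρ.cross_site v u hvu 1 1 1 1
  norm_num at h
  exact h


set_option maxHeartbeats 1600000 in
private lemma diag_comm (ρ : GaudinRep k W) {r s : Fin k} (hrs : r ≠ s) (i j : Fin 2) :
    (ρ.e r 0 0 * ρ.e s 0 0 - ρ.e r 0 1 * ρ.e s 1 0 +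
        ρ.e r 1 0 * ρ.e s 0 1 - ρ.e r 1 1 * ρ.e s 1 1) * (ρ.e r i j + ρ.e s i j) =
    (ρ.e r i j + ρ.e s i j) * (ρ.e r 0 0 * ρ.e s 0 0 - ρ.e r 0 1 * ρ.e s 1 0 +
        ρ.e r 1 0 * ρ.e s 0 1 - ρ.e r 1 1 * ρ.e s 1 1) := by
  have hsr : s ≠ r := hrs.symm
  fin_cases i <;> fin_cases j <;>
  · simp only [Fin.isValue, Fin.zero_eta, Fin.mk_one, mul_add, add_mul, mul_sub, sub_mul,
      mul_neg, neg_mul, mul_zero, zero_mul, mul_assoc,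
      xf ρ r, yf ρ r, hf ρ r, yx ρ r, hx ρ r, hy ρ r, xx ρ r, yy ρ r, xf ρ s, yf ρ s, hf ρ s, yx ρ s, hx ρ s, hy ρ s, xx ρ s, yy ρ s, cr0000 ρ hsr, cr0001 ρ hsr, cr0010 ρ hsr, cr0011 ρ hsr, cr0100 ρ hsr, cr0101 ρ hsr, cr0110 ρ hsr, cr0111 ρ hsr, cr1000 ρ hsr, cr1001 ρ hsr, cr1010 ρ hsr, cr1011 ρ hsr, cr1100 ρ hsr, cr1101 ρ hsr, cr1110 ρ hsr, cr1111 ρ hsr, mulE (xf ρ r), mulE (yf ρ r), mulE (hf ρ r), mulE (yx ρ r), mulE (hx ρ r), mulE (hy ρ r), mulE (xx ρ r), mulE (yy ρ r), mulE (xf ρ s), mulE (yf ρ s), mulE (hf ρ s), mulE (yx ρ s), mulE (hx ρ s), mulE (hy ρ s), mulE (xx ρ s), mulE (yy ρ s), mulE (cr0000 ρ hsr), mulE (cr0001 ρ hsr), mulE (cr0010 ρ hsr), mulE (cr0011 ρ hsr), mulE (cr0100 ρ hsr), mulE (cr0101 ρ hsr), mulE (cr0110 ρ hsr), mulE (cr0111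 ρ hsr), mulE (cr1000 ρ hsr), mulE (cr1001 ρ hsr), mulE (cr1010 ρ hsr), mulE (cr1011 ρ hsr), mulE (cr1100 ρ hsr), mulE (cr1101 ρ hsr), mulE (cr1110 ρ hsr), mulE (cr1111 ρ hsr)]
    abel

private lemma offdiag_comm (ρ : GaudinRep k W) {r s t : Fin k} (hrt : r ≠ t) (hst : s ≠ t)
    (i j : Fin 2) :
    (ρ.e r 0 0 * ρ.e s 0 0 - ρ.e r 0 1 * ρ.e s 1 0 +
        ρ.e r 1 0 * ρ.e s 0 1 - ρ.e r 1 1 * ρ.e s 1 1) * ρ.e t i j =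
    ρ.e t i j * (ρ.e r 0 0 * ρ.e s 0 0 - ρ.e r 0 1 * ρ.e s 1 0 +
        ρ.e r 1 0 * ρ.e s 0 1 - ρ.e r 1 1 * ρ.e s 1 1) := by
  have key : ∀ a b c d : Fin 2, (a:ℕ) + (b:ℕ) = (c:ℕ) + (d:ℕ) →
      (ρ.e r a b * ρ.e s c d) * ρ.e t i j = ρ.e t i j * (ρ.e r a b * ρ.e s c d) := by
    intro a b c d habcd
    have hsign : ((-1:ℂ) ^ (((c:ℕ) + (d:ℕ)) * ((i:ℕ) + (j:ℕ))) *
        (-1:ℂ) ^ (((a:ℕ) + (b:ℕ)) * ((i:ℕ) + (j:ℕ)))) = 1 := by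
      rw [← pow_add, ← add_mul, ← habcd, ← two_mul, mul_assoc, pow_mul]
      norm_num
    rw [mul_assoc, ρ.cross_site s t hst, mul_smul_comm, ← mul_assoc,
      ρ.cross_site r t hrt, smul_mul_assoc, smul_smul, hsign, one_smul, mul_assoc]
  simp only [sub_mul, add_mul, mul_sub, mul_add, key 0 0 0 0 (by norm_num),
    key 0 1 1 0 (by norm_num), key 1 0 0 1 (by norm_num), key 1 1 1 1 (by norm_num)]

end GaudinRepAux

/-- Each Gaudin Hamiltonian `H_r` commutes with the diagonal action of
`gl(1|1)` on the tensor product: `[H_r, X] = 0` for every `X ∈ gl(1|1)`, the diagonal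
action of the basis element `e_{ij}` being `Σ_s e_{ij}^{(s)}`. -/
theorem gaudin_hamiltonians_commute_with_gl11
    (k : ℕ) (W : Type) [AddCommGroup W] [Module ℂ W]
    (ρ : GaudinRep k W) (b : Fin k → ℂ) (hb : Function.Injective b) (r : Fin k)
    (i j : Fin 2) :
    ρ.H b r * (∑ s, ρ.e s i j) = (∑ s, ρ.e s i j) * ρ.H b r := by
  classical
  unfold GaudinRep.H
  rw [Finset.sum_mul, Finset.mul_sum]
  refine Finset.sum_congr rfl fun s hs => ?_
  rw [smul_mul_assoc, mul_smul_comm]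
  congr 1
  have hsr : s ≠ r := Finset.ne_of_mem_erase hs
  have hX : (ρ.e r i j + ρ.e s i j) + ∑ t ∈ (Finset.univ.erase r).erase s, ρ.e t i j =
      ∑ t, ρ.e t i j := by
    rw [add_assoc, Finset.add_sum_erase _ (fun t => ρ.e t i j) (Finset.mem_erase.mpr ⟨hsr, Finset.mem_univ s⟩),
      Finset.add_sum_erase _ (fun t => ρ.e t i j) (Finset.mem_univ r)]
  rw [← hX, mul_add, add_mul, GaudinRepAux.diag_comm ρ hsr.symm, Finset.mul_sum,
    Finset.sum_mul]
  congr 1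
  refine Finset.sum_congr rfl fun t ht => ?_
  have ht' := Finset.mem_erase.mp ht
  have ht2 := Finset.mem_erase.mp ht'.2
  exact GaudinRepAux.offdiag_comm ρ ht2.1.symm ht'.1.symm i j
end

section
/- The Weyl module W_η of U(gl(1|1)[t]) associated to a monic polynomial η of degree m has dimension at most 2^m. -/
set_option synthInstance.maxHeartbeats 1000000
set_option maxHeartbeats 1000000

/-- A representation of the current superalgebra `gl(1|1)[t]` on a complex vector space:
operators `E i j r` (representing `e_{i+1,j+1}[r] = e_{i+1,j+1} ⊗ tʳ`) satisfying the
supercommutator relations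
`[e_{ij}[r], e_{kl}[s]] = δ_{jk} e_{il}[r+s] − (−1)^{(|i|+|j|)(|k|+|l|)} δ_{il} e_{kj}[r+s]`
(anticommutator when both elements are odd). -/
structure CurrentRep (W : Type) [AddCommGroup W] [Module ℂ W] where
  E : Fin 2 → Fin 2 → ℕ → Module.End ℂ W
  rel : ∀ (i j k l : Fin 2) (r s : ℕ),
    E i j r * E k l s -
        ((-1 : ℂ) ^ (((i : ℕ) + (j : ℕ)) * ((k : ℕ) + (l : ℕ)))) • (E k l s * E i j r) =
      (if j = k then E i l (r + s) else 0) -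
        ((-1 : ℂ) ^ (((i : ℕ) + (j : ℕ)) * ((k : ℕ) + (l : ℕ)))) •
          (if i = l then E k j (r + s) else 0)

/-- `w` generates `W` as a `gl(1|1)[t]`-module. -/
def CurrentRep.IsCyclic {W : Type} [AddCommGroup W] [Module ℂ W]
    (ρ : CurrentRep W) (w : W) : Prop :=
  ∀ P : Submodule ℂ W, (∀ (i j : Fin 2) (r : ℕ) (x : W), x ∈ P → ρ.E i j r x ∈ P) →
    w ∈ P → P = ⊤

/-- Let `η(x) = Σ_{i=0}^m γ_i xⁱ` be monic of degree `m` and let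
`c : ℕ → ℂ` be the coefficient sequence of `η'(x)/η(x) = Σ_r c_r x^{−r−1}` (characterized by
`η · (Σ_r c_r x^{−r−1}) = η'`).  Then any `gl(1|1)[t]`-module `W` generated by an (even)
vector `w` with `e₁₁(x)w = (η'/η)w`, `e₂₂(x)w = e₁₂(x)w = 0` and `Σ_i γ_i e₂₁[i] w = 0` —
in particular the Weyl module `W_η` — has dimension at most `2^m`. -/
theorem weyl_module_dim_le
    (m : ℕ) (γ : ℕ → ℂ) (hmonic : γ m = 1) (htop : ∀ i, m < i → γ i = 0)
    (c : ℕ → ℂ)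
    (hc1 : ∀ j : ℕ, (∑ i ∈ Finset.range (m + 1),
        γ i * (if j + 1 ≤ i then c (i - j - 1) else 0)) = (j + 1 : ℂ) * γ (j + 1))
    (hc2 : ∀ j : ℕ, (∑ i ∈ Finset.range (m + 1), γ i * c (i + j)) = 0)
    (W : Type) [AddCommGroup W] [Module ℂ W] (ρ : CurrentRep W) (w : W)
    (h11 : ∀ r : ℕ, ρ.E 0 0 r w = c r • w)
    (h22 : ∀ r : ℕ, ρ.E 1 1 r w = 0)
    (h12 : ∀ r : ℕ, ρ.E 0 1 r w = 0)
    (h21 : ∑ i ∈ Finset.range (m + 1), γ i • ρ.E 1 0 i w = 0)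
    (hcyc : ρ.IsCyclic w) :
    Module.rank ℂ W ≤ 2 ^ m := by
  
  classical
  -- the four structural relations
  have relAA : ∀ r s : ℕ, ρ.E 1 0 r * ρ.E 1 0 s + ρ.E 1 0 s * ρ.E 1 0 r = 0 := by
    intro r s; have h := ρ.rel 1 0 1 0 r s; simpa using h
  have relAC : ∀ r s : ℕ, ρ.E 1 0 r * ρ.E 1 0 s = -(ρ.E 1 0 s * ρ.E 1 0 r) :=
    fun r s => eq_neg_of_add_eq_zero_left (relAA r s)
  have relC : ∀ r s : ℕ,
      ρ.E 0 0 r * ρ.E 1 0 s - ρ.E 1 0 s * ρ.E 0 0 r = -ρ.E 1 0 (r + s) := by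
    intro r s; have h := ρ.rel 0 0 1 0 r s; simpa using h
  have relD : ∀ r s : ℕ,
      ρ.E 1 1 r * ρ.E 1 0 s - ρ.E 1 0 s * ρ.E 1 1 r = ρ.E 1 0 (r + s) := by
    intro r s; have h := ρ.rel 1 1 1 0 r s; simpa using h
  have relE : ∀ r s : ℕ,
      ρ.E 0 1 r * ρ.E 1 0 s + ρ.E 1 0 s * ρ.E 0 1 r
        = ρ.E 0 0 (r + s) + ρ.E 1 1 (r + s) := by
    intro r s; have h := ρ.rel 0 1 1 0 r s; simpa using h
  have sq_zero : ∀ r : ℕ, ρ.E 1 0 r * ρ.E 1 0 r = 0 := by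
    intro r
    have h2 : (2 : ℂ) • (ρ.E 1 0 r * ρ.E 1 0 r) = 0 := by
      rw [two_smul]; exact relAA r r
    rcases smul_eq_zero.mp h2 with h' | h'
    · exact absurd h' two_ne_zero
    · exact h'
  -- products over lists
  set prodL : List ℕ → Module.End ℂ W :=
    fun l => (l.map (fun r => ρ.E 1 0 r)).prod with hprodL
  have prodL_nil : prodL [] = 1 := by simp [hprodL]
  have prodL_cons : ∀ (a : ℕ) (l : List ℕ),
      prodL (a :: l) = ρ.E 1 0 a * prodL l := by
    intro a l; simp [hprodL]
  have dup_zero : ∀ (l : List ℕ) (a : ℕ), a ∈ l → prodL (a :: l) = 0 := by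
    intro l
    induction l with
    | nil => intro a ha; simp at ha
    | cons b l ih =>
      intro a ha
      rcases List.mem_cons.mp ha with h | h
      · subst h
        rw [prodL_cons, prodL_cons, ← mul_assoc, sq_zero, zero_mul]
      · have key : prodL (a :: b :: l) = -(ρ.E 1 0 b * prodL (a :: l)) := by
          rw [prodL_cons, prodL_cons, prodL_cons, ← mul_assoc, relAC a b,
            neg_mul, mul_assoc]
        rw [key, ih a h, mul_zero, neg_zero]
  have perm_sign : ∀ {l1 l2 : List ℕ}, l1.Perm l2 →
      ∃ ε : ℂ, (ε = 1 ∨ ε = -1) ∧ prodL l1 = ε • prodL l2 := by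
    intro l1 l2 h
    induction h with
    | nil => exact ⟨1, Or.inl rfl, (one_smul _ _).symm⟩
    | cons a h ih =>
      obtain ⟨ε, hε, he⟩ := ih
      exact ⟨ε, hε, by rw [prodL_cons, he, prodL_cons, mul_smul_comm]⟩
    | swap a b l =>
      refine ⟨-1, Or.inr rfl, ?_⟩
      rw [prodL_cons, prodL_cons, prodL_cons, prodL_cons, ← mul_assoc,
        ← mul_assoc, relAC b a]
      simp
    | trans h1 h2 ih1 ih2 =>
      obtain ⟨ε1, hε1, he1⟩ := ih1
      obtain ⟨ε2, hε2, he2⟩ := ih2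
      refine ⟨ε1 * ε2, ?_, by rw [he1, he2, smul_smul]⟩
      rcases hε1 with h | h <;> rcases hε2 with h' | h' <;> simp [h, h']
  have anticomm_prod : ∀ (l : List ℕ) (a : ℕ),
      ρ.E 1 0 a * prodL l = ((-1 : ℂ) ^ l.length) • (prodL l * ρ.E 1 0 a) := by
    intro l
    induction l with
    | nil => intro a; simp [prodL_nil]
    | cons b l ih =>
      intro a
      rw [prodL_cons, ← mul_assoc, relAC a b, neg_mul, mul_assoc, ih a,
        mul_smul_comm, List.length_cons, pow_succ, mul_neg_one, neg_smul,
        mul_assoc]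
  -- the shifted relation Σ γᵢ e₂₁[t+i] w = 0
  have F : ∀ t : ℕ, ∑ i ∈ Finset.range (m + 1), γ i • ρ.E 1 0 (t + i) w = 0 := by
    intro t
    have h0 : ρ.E 0 0 t (∑ i ∈ Finset.range (m + 1), γ i • ρ.E 1 0 i w) = 0 := by
      rw [h21, map_zero]
    rw [map_sum] at h0
    have hterm : ∀ i, ρ.E 0 0 t (γ i • ρ.E 1 0 i w)
        = c t • (γ i • ρ.E 1 0 i w) - γ i • ρ.E 1 0 (t + i) w := by
      intro i
      have h := DFunLike.congr_fun (relC t i) w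
      simp only [LinearMap.sub_apply, Module.End.mul_apply, LinearMap.neg_apply,
        h11 t, map_smul] at h
      rw [sub_eq_iff_eq_add] at h
      rw [map_smul, h, smul_add, smul_neg, smul_comm (γ i) (c t)]
      abel
    rw [Finset.sum_congr rfl (fun i _ => hterm i), Finset.sum_sub_distrib,
      ← Finset.smul_sum, h21, smul_zero, zero_sub, neg_eq_zero] at h0
    exact h0
  -- the candidate submodule
  set v : Finset ℕ → W := fun s => prodL (s.sort (· ≤ ·)) w with hv
  set T : Set (Finset ℕ) := ↑((Finset.range m).powerset) with hT
  set P0 : Submodule ℂ W := Submodule.span ℂ (v '' T) with hP0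
  have hmemT : ∀ s : Finset ℕ, s ∈ T ↔ s ⊆ Finset.range m := by
    intro s; rw [hT, Finset.mem_coe, Finset.mem_powerset]
  have hvP0 : ∀ s ∈ T, v s ∈ P0 := fun s hs => Submodule.subset_span ⟨s, hs, rfl⟩
  have hvs : ∀ s : Finset ℕ, v s = prodL (s.sort (· ≤ ·)) w := fun s => rfl
  -- key lemma: e₂₁[r] preserves the span, for every r
  have lemKey : ∀ r : ℕ, ∀ s ∈ T, ρ.E 1 0 r (v s) ∈ P0 := by
    intro r
    induction r using Nat.strong_induction_on with
    | _ r IH =>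
      intro s hs
      by_cases hr : r < m
      · by_cases hmem : r ∈ s
        · have hz : prodL (r :: s.sort (· ≤ ·)) = 0 :=
            dup_zero _ r ((Finset.mem_sort _).mpr hmem)
          have h := DFunLike.congr_fun hz w
          rw [prodL_cons] at h
          simp only [Module.End.mul_apply, LinearMap.zero_apply] at h
          rw [hvs s, h]
          exact P0.zero_mem
        · have hins : insert r s ∈ T := by
            rw [hmemT] at hs ⊢
            exact Finset.insert_subset (Finset.mem_range.mpr hr) hs
          have hperm : (r :: s.sort (· ≤ ·)).Perm ((insert r s).sort (· ≤ ·)) :=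
            ((Finset.sort_perm_toList (s := s) (r := (· ≤ ·))).cons r).trans
              (((Finset.toList_insert hmem).symm).trans
                (Finset.sort_perm_toList (s := insert r s) (r := (· ≤ ·))).symm)
          obtain ⟨ε, _, he⟩ := perm_sign hperm
          have h := DFunLike.congr_fun he w
          rw [prodL_cons] at h
          simp only [Module.End.mul_apply, LinearMap.smul_apply] at h
          rw [hvs s, h]
          exact P0.smul_mem ε (hvP0 _ hins)
      · have hrt : (r - m) + m = r := Nat.sub_add_cancel (le_of_not_gt hr)
        set t := r - m with ht
        have hx : ∀ j : ℕ, ρ.E 1 0 j (v s)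
            = ((-1 : ℂ) ^ (s.sort (· ≤ ·)).length) •
                prodL (s.sort (· ≤ ·)) (ρ.E 1 0 j w) := by
          intro j
          have h := DFunLike.congr_fun (anticomm_prod (s.sort (· ≤ ·)) j) w
          simp only [Module.End.mul_apply, LinearMap.smul_apply] at h
          rw [hvs s, h]
        have hsum : ∑ i ∈ Finset.range (m + 1), γ i • ρ.E 1 0 (t + i) (v s) = 0 := by
          calc ∑ i ∈ Finset.range (m + 1), γ i • ρ.E 1 0 (t + i) (v s)
              = ∑ i ∈ Finset.range (m + 1), γ i •
                  (((-1 : ℂ) ^ (s.sort (· ≤ ·)).length) •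
                    prodL (s.sort (· ≤ ·)) (ρ.E 1 0 (t + i) w)) :=
                Finset.sum_congr rfl fun i _ => by rw [hx]
            _ = ((-1 : ℂ) ^ (s.sort (· ≤ ·)).length) •
                  prodL (s.sort (· ≤ ·))
                    (∑ i ∈ Finset.range (m + 1), γ i • ρ.E 1 0 (t + i) w) := by
                rw [map_sum, Finset.smul_sum]
                refine Finset.sum_congr rfl fun i _ => ?_
                rw [map_smul, smul_comm]
            _ = 0 := by rw [F t, map_zero, smul_zero]
        rw [Finset.sum_range_succ, hmonic, one_smul, hrt] at hsum
        rw [eq_neg_of_add_eq_zero_right hsum]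
        exact P0.neg_mem (Submodule.sum_mem _ fun i hi =>
          P0.smul_mem _ (IH (t + i)
            (by have := Finset.mem_range.mp hi; omega) s hs))
  have stab10 : ∀ (r : ℕ) (x : W), x ∈ P0 → ρ.E 1 0 r x ∈ P0 := by
    intro r x hx
    have hle : Submodule.span ℂ (v '' T) ≤ P0.comap (ρ.E 1 0 r) :=
      Submodule.span_le.mpr (by rintro y ⟨s, hs, rfl⟩; exact lemKey r s hs)
    rw [hP0] at hx
    exact hle hx
  have hEmptyT : (∅ : Finset ℕ) ∈ T := by rw [hmemT]; exact Finset.empty_subset _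
  have hvEmpty : v ∅ = w := by
    rw [hvs, Finset.sort_empty, prodL_nil, Module.End.one_apply]
  have hw : w ∈ P0 := hvEmpty ▸ hvP0 ∅ hEmptyT
  have mem_all : ∀ l : List ℕ, prodL l w ∈ P0 := by
    intro l
    induction l with
    | nil => rw [prodL_nil, Module.End.one_apply]; exact hw
    | cons a l ih =>
      rw [prodL_cons, Module.End.mul_apply]
      exact stab10 a _ ih
  have lemB : ∀ (t : ℕ) (l : List ℕ), ρ.E 0 0 t (prodL l w) ∈ P0 := by
    intro t l
    induction l with
    | nil =>
      rw [prodL_nil, Module.End.one_apply, h11 t]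
      exact P0.smul_mem _ hw
    | cons a l ih =>
      have h := DFunLike.congr_fun (relC t a) (prodL l w)
      simp only [LinearMap.sub_apply, Module.End.mul_apply, LinearMap.neg_apply] at h
      rw [sub_eq_iff_eq_add] at h
      rw [prodL_cons, Module.End.mul_apply, h]
      exact P0.add_mem (P0.neg_mem (stab10 _ _ (mem_all l))) (stab10 a _ ih)
  have lemC : ∀ (t : ℕ) (l : List ℕ), ρ.E 1 1 t (prodL l w) ∈ P0 := by
    intro t l
    induction l with
    | nil =>
      rw [prodL_nil, Module.End.one_apply, h22 t]
      exact P0.zero_mem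
    | cons a l ih =>
      have h := DFunLike.congr_fun (relD t a) (prodL l w)
      simp only [LinearMap.sub_apply, Module.End.mul_apply] at h
      rw [sub_eq_iff_eq_add] at h
      rw [prodL_cons, Module.End.mul_apply, h]
      exact P0.add_mem (stab10 _ _ (mem_all l)) (stab10 a _ ih)
  have lemD : ∀ (t : ℕ) (l : List ℕ), ρ.E 0 1 t (prodL l w) ∈ P0 := by
    intro t l
    induction l with
    | nil =>
      rw [prodL_nil, Module.End.one_apply, h12 t]
      exact P0.zero_mem
    | cons a l ih =>
      have h := DFunLike.congr_fun (relE t a) (prodL l w)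
      simp only [LinearMap.add_apply, Module.End.mul_apply] at h
      have h' := eq_sub_of_add_eq h
      rw [prodL_cons, Module.End.mul_apply, h']
      exact P0.sub_mem (P0.add_mem (lemB (t + a) l) (lemC (t + a) l))
        (stab10 a _ ih)
  have stabAll : ∀ (i j : Fin 2) (r : ℕ) (x : W), x ∈ P0 → ρ.E i j r x ∈ P0 := by
    intro i j r
    have hgen : ∀ s ∈ T, ρ.E i j r (v s) ∈ P0 := by
      intro s hs
      fin_cases i <;> fin_cases j
      · rw [hvs s]; exact lemB r _
      · rw [hvs s]; exact lemD r _
      · exact lemKey r s hs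
      · rw [hvs s]; exact lemC r _
    intro x hx
    have hle : Submodule.span ℂ (v '' T) ≤ P0.comap (ρ.E i j r) :=
      Submodule.span_le.mpr (by rintro y ⟨s, hs, rfl⟩; exact hgen s hs)
    rw [hP0] at hx
    exact hle hx
  have hPtop : P0 = ⊤ := hcyc P0 stabAll hw
  have hrank : Module.rank ℂ W = Module.rank ℂ P0 := by
    rw [hPtop]; exact (rank_top ℂ W).symm
  rw [hrank, hP0]
  refine le_trans (rank_span_le _) (le_trans Cardinal.mk_image_le ?_)
  rw [hT]
  refine le_trans (le_of_eq (Cardinal.mk_coe_finset (s := (Finset.range m).powerset))) ?_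
  rw [Finset.card_powerset, Finset.card_range]
  norm_num
end

section
/- Let A be a finite-dimensional commutative Frobenius algebra over C and M its regular representation. Then every eigenspace of A acting on M (the common eigenspace for a character E: A → C) has dimension one. -/
/-- The eigenspace of a commutative algebra `A` acting on its regular representation,
associated to a character `E : A → ℂ`: the common eigenspace `∩_{a∈A} ker(a − E(a))`. -/
def regularEigenspace (A : Type) [CommRing A] [Algebra ℂ A] (E : A →ₐ[ℂ] ℂ) :
    Submodule ℂ A where
  carrier := {m | ∀ a : A, a * m = E a • m}
  zero_mem' := by intro a; simp
  add_mem' := by intro x y hx hy a; simp [mul_add, hx a, hy a, smul_add]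
  smul_mem' := by
    intro c x hx a
    simp only [Algebra.mul_smul_comm, hx a, Set.mem_setOf_eq]
    rw [smul_comm]

/-- Let `A` be a finite-dimensional commutative Frobenius algebra over `ℂ`
(i.e. one carrying a nondegenerate symmetric invariant bilinear form) and `M = A` its regular
representation.  Then for every character `E : A → ℂ`, the common eigenspace of `A` on `M`
associated to `E` has dimension one. -/
theorem frobenius_regular_eigenspace_dim_one
    (A : Type) [CommRing A] [Algebra ℂ A] [FiniteDimensional ℂ A]
    (B : LinearMap.BilinForm ℂ A)
    (hsymm : ∀ a b : A, B a b = B b a)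
    (hinv : ∀ a b c : A, B (a * b) c = B a (b * c))
    (hnd : B.Nondegenerate)
    (E : A →ₐ[ℂ] ℂ) :
    Module.finrank ℂ (regularEigenspace A E) = 1 := by
  classical
  -- the element of A corresponding to the functional E under the Frobenius form
  set m : A := (B.toDual hnd).symm E.toLinearMap with hm
  have hBm : ∀ x : A, B m x = E x := fun x =>
    LinearMap.BilinForm.apply_toDual_symm_apply (hB := hnd) (f := E.toLinearMap) (v := x)
  -- key: for any x in the eigenspace, B a x = E a * B 1 x
  have key : ∀ x ∈ regularEigenspace A E, ∀ a : A, B a x = E a * B 1 x := by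
    intro x hx a
    have h1 : B a x = B 1 (a * x) := by
      have := hinv 1 a x
      simpa using this
    rw [h1, hx a, map_smul]
    simp [smul_eq_mul]
  -- m lies in the eigenspace
  have hmem : m ∈ regularEigenspace A E := by
    intro a
    have : ∀ x : A, B (a * m - E a • m) x = 0 := by
      intro x
      have h1 : B (a * m) x = E a * E x := by
        rw [mul_comm a m, hinv m a x, hBm (a * x)]
        simp
      have h2 : B (E a • m) x = E a * E x := by
        rw [map_smul]
        simp [hBm x, smul_eq_mul]
      simp [map_sub, h1, h2, hBm]
    have := hnd.1 _ this
    exact sub_eq_zero.mp this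
  have hmne : m ≠ 0 := by
    intro h
    have : B m 1 = E 1 := hBm 1
    rw [h] at this
    simp at this
  -- upper bound: B 1 restricted to the eigenspace is injective into ℂ
  have hinj : Function.Injective ((B 1).comp (regularEigenspace A E).subtype) := by
    rw [← LinearMap.ker_eq_bot, LinearMap.ker_eq_bot']
    intro ⟨x, hx⟩ hx0
    have hBx : B 1 x = 0 := hx0
    have : ∀ a : A, B x a = 0 := by
      intro a
      rw [hsymm x a, key x hx a, hBx, mul_zero]
    have := hnd.1 x this
    exact Subtype.ext this
  have hle : Module.finrank ℂ (regularEigenspace A E) ≤ 1 := by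
    have := LinearMap.finrank_le_finrank_of_injective hinj
    simpa using this
  have hge : 0 < Module.finrank ℂ (regularEigenspace A E) := by
    rw [Module.finrank_pos_iff]
    exact ⟨⟨⟨m, hmem⟩, 0, by simp [hmne]⟩⟩
  omega
end

section
/- Writing nf(x)g(x) = n x^{n−1} + Σ_{i=1}^{n−1} (−1)^i (n−i) Σ_i x^{n−1−i} where f(x) = x^l + Σ f_i x^{l−i} and g(x) = x^{n−l−1} + Σ g_j x^{n−l−1−j} are generic monic polynomials with indeterminate coefficients, the elements Σ_1, ..., Σ_{n−1}, Σ_n are algebraically independent in the polynomial ring O_l = C[f_1,...,f_l, g_1,...,g_{n−l−1}, Σ_n]; equivalently the map C[z_1,...,z_n]^{S_n} → O_l sending σ_i(z) ↦ Σ_i is injective. -/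
set_option maxHeartbeats 1000000

namespace GaudinOl

/- The algebra `O_l = ℂ[f₁,...,f_l, g₁,...,g_{n−l−1}, Σ_n]` is modelled as
`MvPolynomial (Fin n) ℂ`, the variable with index `i < l` being `f_{i+1}`, the variable
with index `l ≤ i < n−1` being `g_{i−l+1}`, and the last variable being `Σ_n`. -/

/-- The generic monic polynomial `f(x) = x^l + Σ_{i=1}^l f_i x^{l−i}`. -/
noncomputable def fPoly (n l : ℕ) : Polynomial (MvPolynomial (Fin n) ℂ) :=
  Polynomial.X ^ l +
    ∑ i : Fin n, if (i : ℕ) < l then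
      Polynomial.C (MvPolynomial.X i) * Polynomial.X ^ (l - 1 - (i : ℕ)) else 0

/-- The generic monic polynomial `g(x) = x^{n−l−1} + Σ_{j=1}^{n−l−1} g_j x^{n−l−1−j}`. -/
noncomputable def gPoly (n l : ℕ) : Polynomial (MvPolynomial (Fin n) ℂ) :=
  Polynomial.X ^ (n - l - 1) +
    ∑ i : Fin n, if l ≤ (i : ℕ) ∧ (i : ℕ) < n - 1 then
      Polynomial.C (MvPolynomial.X i) * Polynomial.X ^ (n - l - 2 - ((i : ℕ) - l)) else 0

/-- The elements `Σ₁, ..., Σ_{n−1}, Σ_n` of `O_l`, with `Σ₁,...,Σ_{n−1}` defined by the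
expansion `n f(x) g(x) = n x^{n−1} + Σ_{i=1}^{n−1} (−1)^i (n−i) Σ_i x^{n−1−i}` and `Σ_n` the
extra variable.  Here `SigmaElt n l i` is `Σ_{i+1}`. -/
noncomputable def SigmaElt (n l : ℕ) (i : Fin n) : MvPolynomial (Fin n) ℂ :=
  if (i : ℕ) + 1 = n then MvPolynomial.X i
  else ((-1 : ℂ) ^ ((i : ℕ) + 1) * ((n : ℂ) - ((i : ℕ) + 1))⁻¹) •
    (((n : ℂ) • (fPoly n l * gPoly n l)).coeff (n - 1 - ((i : ℕ) + 1)))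

open MvPolynomial

/-- Scaling an algebraically independent family by nonzero scalars. -/
lemma smul_algebraicIndependent {ι A : Type*} [CommRing A] [Algebra ℂ A]
    {c : ι → ℂ} (hc : ∀ i, c i ≠ 0) {w : ι → A}
    (hw : AlgebraicIndependent ℂ w) : AlgebraicIndependent ℂ fun i => c i • w i := by
  classical
  rw [algebraicIndependent_iff_injective_aeval] at hw ⊢
  have key : (aeval fun i => c i • w i : MvPolynomial ι ℂ →ₐ[ℂ] A)
      = (aeval w).comp (aeval fun i => c i • (X i : MvPolynomial ι ℂ)) := by
    apply algHom_ext
    intro i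
    simp
  have hinj : Function.Injective
      (aeval (fun i => c i • (X i : MvPolynomial ι ℂ)) :
        MvPolynomial ι ℂ →ₐ[ℂ] MvPolynomial ι ℂ) := by
    have hcomp : ((aeval fun i => (c i)⁻¹ • (X i : MvPolynomial ι ℂ)) :
          MvPolynomial ι ℂ →ₐ[ℂ] MvPolynomial ι ℂ).comp
        (aeval fun i => c i • (X i : MvPolynomial ι ℂ)) = AlgHom.id ℂ _ := by
      apply algHom_ext
      intro i
      simp [smul_smul, mul_inv_cancel₀ (hc i)]
    have hli : Function.LeftInverse
        (aeval fun i => (c i)⁻¹ • (X i : MvPolynomial ι ℂ))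
        (aeval fun i => c i • (X i : MvPolynomial ι ℂ)) := by
      intro p
      rw [← AlgHom.comp_apply, hcomp, AlgHom.id_apply]
    exact hli.injective
  rw [key, AlgHom.coe_comp]
  exact hw.comp hinj

/-- The embedding `Fin m ↪ Fin n`, `j ↦ j`. -/
def embLow {m n : ℕ} (h : m ≤ n) : Fin m ↪ Fin n :=
  ⟨fun j => ⟨(j : ℕ), by omega⟩, fun a b hab => by
    apply Fin.ext; simpa [Fin.ext_iff] using hab⟩

/-- The embedding `Fin m ↪ Fin n`, `j ↦ a + j`. -/
def embShift {m n : ℕ} (a : ℕ) (h : a + m ≤ n) : Fin m ↪ Fin n :=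
  ⟨fun j => ⟨a + (j : ℕ), by omega⟩, fun x y hxy => by
    apply Fin.ext
    have := congrArg Fin.val hxy
    simpa [Fin.ext_iff] using this⟩

lemma filter_lt_eq {n l : ℕ} (h : l ≤ n) :
    (Finset.univ.filter fun j : Fin n => (j : ℕ) < l) = Finset.univ.map (embLow h) := by
  ext x
  simp only [Finset.mem_filter, Finset.mem_univ, true_and, Finset.mem_map,
    Function.Embedding.coeFn_mk, embLow]
  constructor
  · intro hx
    exact ⟨⟨(x : ℕ), hx⟩, by apply Fin.ext; rfl⟩
  · rintro ⟨j, rfl⟩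
    exact j.2

lemma filter_between_eq {n a b : ℕ} (hab : a ≤ b) (h : b ≤ n) :
    (Finset.univ.filter fun j : Fin n => a ≤ (j : ℕ) ∧ (j : ℕ) < b)
      = Finset.univ.map (embShift a (show a + (b - a) ≤ n by omega)) := by
  ext x
  simp only [Finset.mem_filter, Finset.mem_univ, true_and, Finset.mem_map,
    Function.Embedding.coeFn_mk, embShift]
  constructor
  · rintro ⟨h1, h2⟩
    exact ⟨⟨(x : ℕ) - a, by omega⟩, by apply Fin.ext; show a + ((x : ℕ) - a) = x; omega⟩
  · rintro ⟨j, rfl⟩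
    have := j.2
    show a ≤ a + (j : ℕ) ∧ a + (j : ℕ) < b
    omega

/-- Bridge: the multiset elementary symmetric function of renamed variables. -/
lemma esymm_bridge {n m : ℕ} (e : Fin m ↪ Fin n) (k : ℕ) :
    (((Finset.univ.map e).val.map (X : Fin n → MvPolynomial (Fin n) ℂ))).esymm k
      = rename e (esymm (Fin m) ℂ k) := by
  rw [Finset.esymm_map_val, MvPolynomial.esymm, map_sum, Finset.powersetCard_map,
    Finset.sum_map]
  refine Finset.sum_congr rfl fun t _ => ?_
  rw [show (Finset.mapEmbedding e).toEmbedding t = t.map e from rfl, map_prod, Finset.prod_map]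
  simp

lemma multiset_esymm_zero {R : Type*} [CommSemiring R] (s : Multiset R) : s.esymm 0 = 1 := by
  simp [Multiset.esymm]

lemma map_fPoly (n l : ℕ) (hl : l < n) (ψ : MvPolynomial (Fin n) ℂ →+* MvPolynomial (Fin n) ℂ)
    (Mu : Multiset (MvPolynomial (Fin n) ℂ))
    (hMu : Mu = ((Finset.univ.map (embLow hl.le)).val.map (X : Fin n → MvPolynomial (Fin n) ℂ)))
    (hψ : ∀ i : Fin n, (i : ℕ) < l → ψ (X i) = Mu.esymm ((i : ℕ) + 1)) :
    (fPoly n l).map ψ = (Mu.map fun r => Polynomial.X + Polynomial.C r).prod := by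
  have hcard : Multiset.card Mu = l := by simp [hMu]
  rw [Multiset.prod_X_add_C_eq_sum_esymm, hcard, Finset.sum_range_succ',
    multiset_esymm_zero]
  unfold fPoly
  rw [Polynomial.map_add, Polynomial.map_pow, Polynomial.map_X, Polynomial.map_sum]
  rw [show Polynomial.C (1 : MvPolynomial (Fin n) ℂ) * Polynomial.X ^ (l - 0)
      = Polynomial.X ^ l by simp]
  rw [add_comm (Polynomial.X ^ l)]
  congr 1
  calc
    ∑ i : Fin n, ((if (i : ℕ) < l then
          Polynomial.C (MvPolynomial.X i) * Polynomial.X ^ (l - 1 - (i : ℕ)) else 0).map ψ)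
        = ∑ i : Fin n, (if (i : ℕ) < l then
            Polynomial.C (Mu.esymm ((i : ℕ) + 1)) * Polynomial.X ^ (l - 1 - (i : ℕ)) else 0) := by
          refine Finset.sum_congr rfl fun i _ => ?_
          split_ifs with h
          · rw [Polynomial.map_mul, Polynomial.map_C, Polynomial.map_pow, Polynomial.map_X,
              hψ i h]
          · exact Polynomial.map_zero ψ
    _ = ∑ i ∈ Finset.univ.filter (fun i : Fin n => (i : ℕ) < l),
          Polynomial.C (Mu.esymm ((i : ℕ) + 1)) * Polynomial.X ^ (l - 1 - (i : ℕ)) :=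
        (Finset.sum_filter _ _).symm
    _ = ∑ j : Fin l, Polynomial.C (Mu.esymm ((j : ℕ) + 1)) * Polynomial.X ^ (l - 1 - (j : ℕ)) := by
        rw [filter_lt_eq hl.le, Finset.sum_map]; rfl
    _ = ∑ k ∈ Finset.range l,
          Polynomial.C (Mu.esymm (k + 1)) * Polynomial.X ^ (l - 1 - k) :=
        Fin.sum_univ_eq_sum_range
          (fun k => Polynomial.C (Mu.esymm (k + 1)) * Polynomial.X ^ (l - 1 - k)) l
    _ = ∑ k ∈ Finset.range l,
          Polynomial.C (Mu.esymm (k + 1)) * Polynomial.X ^ (l - (k + 1)) := by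
        refine Finset.sum_congr rfl fun k _ => ?_
        rw [show l - 1 - k = l - (k + 1) by omega]

lemma map_gPoly (n l : ℕ) (hl : l < n) (ψ : MvPolynomial (Fin n) ℂ →+* MvPolynomial (Fin n) ℂ)
    (Mv : Multiset (MvPolynomial (Fin n) ℂ))
    (hMv : Mv = ((Finset.univ.map (embShift l (show l + (n - 1 - l) ≤ n by omega))).val.map
      (X : Fin n → MvPolynomial (Fin n) ℂ)))
    (hψ : ∀ i : Fin n, l ≤ (i : ℕ) → (i : ℕ) < n - 1 → ψ (X i) = Mv.esymm ((i : ℕ) - l + 1)) :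
    (gPoly n l).map ψ = (Mv.map fun r => Polynomial.X + Polynomial.C r).prod := by
  have hcard : Multiset.card Mv = n - 1 - l := by simp [hMv]
  rw [Multiset.prod_X_add_C_eq_sum_esymm, hcard, Finset.sum_range_succ',
    multiset_esymm_zero]
  unfold gPoly
  rw [Polynomial.map_add, Polynomial.map_pow, Polynomial.map_X, Polynomial.map_sum]
  rw [show Polynomial.C (1 : MvPolynomial (Fin n) ℂ) * Polynomial.X ^ (n - 1 - l - 0)
      = Polynomial.X ^ (n - l - 1) by rw [map_one, one_mul]; congr 1; omega]
  rw [add_comm (Polynomial.X ^ (n - l - 1))]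
  congr 1
  calc
    ∑ i : Fin n, ((if l ≤ (i : ℕ) ∧ (i : ℕ) < n - 1 then
          Polynomial.C (MvPolynomial.X i) * Polynomial.X ^ (n - l - 2 - ((i : ℕ) - l))
        else 0).map ψ)
        = ∑ i : Fin n, (if l ≤ (i : ℕ) ∧ (i : ℕ) < n - 1 then
            Polynomial.C (Mv.esymm ((i : ℕ) - l + 1)) *
              Polynomial.X ^ (n - l - 2 - ((i : ℕ) - l)) else 0) := by
          refine Finset.sum_congr rfl fun i _ => ?_
          split_ifs with h
          · rw [Polynomial.map_mul, Polynomial.map_C, Polynomial.map_pow, Polynomial.map_X,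
              hψ i h.1 h.2]
          · exact Polynomial.map_zero ψ
    _ = ∑ i ∈ Finset.univ.filter (fun i : Fin n => l ≤ (i : ℕ) ∧ (i : ℕ) < n - 1),
          Polynomial.C (Mv.esymm ((i : ℕ) - l + 1)) *
            Polynomial.X ^ (n - l - 2 - ((i : ℕ) - l)) :=
        (Finset.sum_filter _ _).symm
    _ = ∑ j : Fin (n - 1 - l), Polynomial.C (Mv.esymm ((l + (j : ℕ)) - l + 1)) *
          Polynomial.X ^ (n - l - 2 - ((l + (j : ℕ)) - l)) := by
        rw [filter_between_eq (show l ≤ n - 1 by omega) (show n - 1 ≤ n by omega),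
          Finset.sum_map]
        rfl
    _ = ∑ k ∈ Finset.range (n - 1 - l), Polynomial.C (Mv.esymm ((l + k) - l + 1)) *
          Polynomial.X ^ (n - l - 2 - ((l + k) - l)) :=
        Fin.sum_univ_eq_sum_range
          (fun k => Polynomial.C (Mv.esymm ((l + k) - l + 1)) *
            Polynomial.X ^ (n - l - 2 - ((l + k) - l))) _
    _ = ∑ k ∈ Finset.range (n - 1 - l),
          Polynomial.C (Mv.esymm (k + 1)) * Polynomial.X ^ (n - 1 - l - (k + 1)) := by
        refine Finset.sum_congr rfl fun k _ => ?_
        rw [show (l + k) - l = k by omega, show n - l - 2 - k = n - 1 - l - (k + 1) by omega]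

/-- The elements `Σ₁, ..., Σ_n` are algebraically independent in the
polynomial ring `O_l = ℂ[f₁,...,f_l, g₁,...,g_{n−l−1}, Σ_n]`; equivalently, the map
`ℂ[z₁,...,z_n]^{S_n} → O_l`, `σ_i(z) ↦ Σ_i`, is injective. -/
theorem sigma_algebraically_independent (n l : ℕ) (hl : l < n) :
    AlgebraicIndependent ℂ (SigmaElt n l) := by
  classical
  have h1n : 1 ≤ n := by omega
  set m := n - 1 with hm
  -- the three multisets of variables
  set Mu : Multiset (MvPolynomial (Fin n) ℂ) :=
    ((Finset.univ.map (embLow hl.le)).val.map (X : Fin n → MvPolynomial (Fin n) ℂ)) with hMu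
  set Mv : Multiset (MvPolynomial (Fin n) ℂ) :=
    ((Finset.univ.map (embShift l (show l + (n - 1 - l) ≤ n by omega))).val.map
      (X : Fin n → MvPolynomial (Fin n) ℂ)) with hMv
  set ew : Fin m ↪ Fin n := embLow (show m ≤ n by omega) with hew
  set Mw : Multiset (MvPolynomial (Fin n) ℂ) :=
    ((Finset.univ.map ew).val.map (X : Fin n → MvPolynomial (Fin n) ℂ)) with hMw
  have hcardw : Multiset.card Mw = n - 1 := by simp [hMw, hm]
  -- the specialization
  set last : Fin n := ⟨n - 1, by omega⟩ with hlast
  set t : Fin n → MvPolynomial (Fin n) ℂ := fun i =>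
    if (i : ℕ) + 1 = n then X last
    else if (i : ℕ) < l then Mu.esymm ((i : ℕ) + 1) else Mv.esymm ((i : ℕ) - l + 1) with ht
  set ψ : MvPolynomial (Fin n) ℂ →ₐ[ℂ] MvPolynomial (Fin n) ℂ := aeval t with hψdef
  refine AlgebraicIndependent.of_comp ψ ?_
  -- properties of ψ on the generators
  have hψf : ∀ i : Fin n, (i : ℕ) < l → ψ.toRingHom (X i) = Mu.esymm ((i : ℕ) + 1) := by
    intro i hi
    have h1 : ¬ ((i : ℕ) + 1 = n) := by omega
    simp only [hψdef, AlgHom.toRingHom_eq_coe, RingHom.coe_coe, aeval_X, ht, h1, if_false,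
      hi, if_true]
  have hψg : ∀ i : Fin n, l ≤ (i : ℕ) → (i : ℕ) < n - 1 →
      ψ.toRingHom (X i) = Mv.esymm ((i : ℕ) - l + 1) := by
    intro i hi1 hi2
    have h1 : ¬ ((i : ℕ) + 1 = n) := by omega
    have h2 : ¬ ((i : ℕ) < l) := by omega
    simp only [hψdef, AlgHom.toRingHom_eq_coe, RingHom.coe_coe, aeval_X, ht, h1, if_false,
      h2]
  -- sum of the multisets
  have hsum : Mu + Mv = Mw := by
    rw [hMu, hMv, hMw, ← filter_lt_eq hl.le,
      ← filter_between_eq (show l ≤ n - 1 by omega) (show n - 1 ≤ n by omega),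
      hew, ← filter_lt_eq (show m ≤ n by omega),
      Finset.filter_val, Finset.filter_val, Finset.filter_val, ← Multiset.map_add]
    congr 1
    rw [Multiset.filter_add_filter]
    have h1 : Multiset.filter
        (fun a : Fin n => (a : ℕ) < l ∧ (l ≤ (a : ℕ) ∧ (a : ℕ) < n - 1))
        Finset.univ.val = 0 :=
      Multiset.filter_eq_nil.2 (fun a _ => by omega)
    have h2 : Multiset.filter
        (fun a : Fin n => (a : ℕ) < l ∨ (l ≤ (a : ℕ) ∧ (a : ℕ) < n - 1))
        Finset.univ.val
        = Multiset.filter (fun a : Fin n => (a : ℕ) < m) Finset.univ.val := by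
      refine Multiset.filter_congr (fun a _ => by omega)
    rw [h1, h2, add_zero]
  -- the coefficient computation
  have hcoeff : ∀ i : Fin n, (i : ℕ) + 1 < n →
      ψ ((fPoly n l * gPoly n l).coeff (n - 1 - ((i : ℕ) + 1)))
        = Mw.esymm ((i : ℕ) + 1) := by
    intro i hi
    have : ψ ((fPoly n l * gPoly n l).coeff (n - 1 - ((i : ℕ) + 1)))
        = ((fPoly n l * gPoly n l).map ψ.toRingHom).coeff (n - 1 - ((i : ℕ) + 1)) := by
      rw [Polynomial.coeff_map]; rfl
    rw [this, Polynomial.map_mul, map_fPoly n l hl ψ.toRingHom Mu hMu hψf,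
      map_gPoly n l hl ψ.toRingHom Mv hMv hψg, ← Multiset.prod_add, ← Multiset.map_add, hsum,
      Multiset.prod_X_add_C_coeff Mw (by omega : n - 1 - ((i : ℕ) + 1) ≤ Multiset.card Mw)]
    congr 1
    omega
  -- the algebraically independent model family
  set esy : Fin m → MvPolynomial (Fin m) ℂ := fun j => esymm (Fin m) ℂ ((j : ℕ) + 1) with hesydef
  have hesy : AlgebraicIndependent ℂ esy := by
    rw [algebraicIndependent_iff_injective_aeval]
    have hkey : ⇑(aeval esy : MvPolynomial (Fin m) ℂ →ₐ[ℂ] MvPolynomial (Fin m) ℂ)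
        = Subtype.val ∘ ⇑(esymmAlgHom (Fin m) ℂ m) := by
      funext p
      exact (esymmAlgHom_apply p).symm
    rw [hkey]
    exact Subtype.val_injective.comp (esymmAlgHom_fin_injective ℂ le_rfl)
  have hren : AlgebraicIndependent ℂ (⇑(rename (R := ℂ) ew) ∘ esy) :=
    hesy.map' (rename_injective _ ew.injective)
  have htrans : Transcendental (Algebra.adjoin ℂ (Set.range (⇑(rename (R := ℂ) ew) ∘ esy)))
      (X last : MvPolynomial (Fin n) ℂ) := by
    have hsub : Algebra.adjoin ℂ (Set.range (⇑(rename (R := ℂ) ew) ∘ esy))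
        ≤ supported ℂ (Set.range ew) := by
      rw [Algebra.adjoin_le_iff]
      rintro _ ⟨j, rfl⟩
      rw [SetLike.mem_coe, mem_supported]
      refine subset_trans (Finset.coe_subset.2 (vars_rename _ _)) ?_
      intro x hx
      simp only [Finset.coe_image, Set.mem_image, Finset.mem_coe] at hx
      obtain ⟨y, _, rfl⟩ := hx
      exact ⟨y, rfl⟩
    have hX : Transcendental (supported ℂ (Set.range ew))
        (X last : MvPolynomial (Fin n) ℂ) := by
      apply transcendental_supported_X
      rintro ⟨j, hj⟩
      have := congrArg Fin.val hj
      simp only [hew, embLow, Function.Embedding.coeFn_mk, hlast] at this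
      change (j : ℕ) = n - 1 at this
      have := j.2
      omega
    exact Transcendental.of_tower_top_of_subalgebra_le hsub hX
  have hopt : AlgebraicIndependent ℂ
      (fun o : Option (Fin m) => o.elim (X last : MvPolynomial (Fin n) ℂ)
        (⇑(rename (R := ℂ) ew) ∘ esy)) :=
    (hren.option_iff_transcendental _).2 htrans
  -- reindexing
  set e : Fin n → Option (Fin m) := fun i =>
    if h : (i : ℕ) + 1 = n then none else some ⟨(i : ℕ), by have := i.isLt; omega⟩ with he
  have heinj : Function.Injective e := by
    intro a b hab
    simp only [he] at hab
    split_ifs at hab with h1 h2 h3 <;>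
      first
        | exact Fin.ext (by omega)
        | exact Option.noConfusion hab
        | (have h4 := Option.some_injective (Fin m) hab
           have h5 : (a : ℕ) = (b : ℕ) := by simpa [Fin.ext_iff] using h4
           exact Fin.ext h5)
  have hbase := hopt.comp e heinj
  -- scaling constants
  set c : Fin n → ℂ := fun i =>
    if (i : ℕ) + 1 = n then 1
    else (-1 : ℂ) ^ ((i : ℕ) + 1) * ((n : ℂ) - ((i : ℕ) + 1))⁻¹ * (n : ℂ) with hc
  have hcne : ∀ i, c i ≠ 0 := by
    intro i
    simp only [hc]
    split_ifs with h
    · exact one_ne_zero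
    · have hin : (i : ℕ) + 1 < n := by have := i.isLt; omega
      have hne : ((n : ℂ) - ((i : ℕ) + 1)) ≠ 0 := by
        have : ((n : ℕ) : ℂ) ≠ (((i : ℕ) + 1 : ℕ) : ℂ) := by
          exact_mod_cast (by omega : n ≠ (i : ℕ) + 1)
        push_cast at this ⊢
        exact sub_ne_zero.2 this
      have hnne : (n : ℂ) ≠ 0 := by
        exact_mod_cast (by omega : n ≠ 0)
      exact mul_ne_zero (mul_ne_zero (pow_ne_zero _ (by norm_num)) (inv_ne_zero hne)) hnne
  have hfinal := smul_algebraicIndependent hcne hbase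
  -- identify the composed family with the scaled model family
  have heq : (⇑ψ ∘ SigmaElt n l)
      = fun i => c i • ((fun o : Option (Fin m) => o.elim (X last : MvPolynomial (Fin n) ℂ)
          (⇑(rename (R := ℂ) ew) ∘ esy)) ∘ e) i := by
    funext i
    simp only [Function.comp_apply]
    by_cases h : (i : ℕ) + 1 = n
    · have hei : e i = none := by simp [he, h]
      have hci : c i = 1 := by simp [hc, h]
      rw [hei, hci]
      simp only [Option.elim, one_smul]
      rw [SigmaElt, if_pos h]
      have : ψ (X i) = t i := aeval_X t i
      rw [this, ht]
      simp only [h, if_true]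
    · have hin : (i : ℕ) + 1 < n := by have := i.isLt; omega
      have hei : e i = some ⟨(i : ℕ), by omega⟩ := by simp [he, h]
      have hci : c i = (-1 : ℂ) ^ ((i : ℕ) + 1) * ((n : ℂ) - ((i : ℕ) + 1))⁻¹ * (n : ℂ) := by
        simp [hc, h]
      rw [hei, hci]
      simp only [Option.elim, Function.comp_apply]
      rw [SigmaElt, if_neg h]
      rw [map_smul]
      have hco : ((n : ℂ) • (fPoly n l * gPoly n l)).coeff (n - 1 - ((i : ℕ) + 1))
          = (n : ℂ) • ((fPoly n l * gPoly n l).coeff (n - 1 - ((i : ℕ) + 1))) :=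
        Polynomial.coeff_smul _ _ _
      rw [hco, map_smul, hcoeff i hin]
      have hbr : Mw.esymm ((i : ℕ) + 1)
          = rename ew (esymm (Fin m) ℂ ((i : ℕ) + 1)) := esymm_bridge ew _
      rw [hbr, smul_smul]
  rw [heq]
  exact hfinal

end GaudinOl
end
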